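/- Let H be a finite-dimensional complex inner product space and let P_E and P_O be orthogonal projections on H with P_E + P_O = 1. Let ψ and φ be unit vectors in H with ⟪ψ, φ⟫ = 0. Suppose there exists a linear operator S on H with 0 ≤ S ≤ 1 (i.e., S and 1 − S are positive semidefinite self-adjoint operators) satisfying the block-diagonality condition S = P_E S P_E + P_O S P_O, and such that ⟪ψ, S ψ⟫ − ⟪φ, S φ⟫ = 1. Then ⟪P_E ψ, P_E φ⟫ = 0 and ⟪P_O ψ, P_O φ⟫ = 0. -/

import Mathlib

open Matrix
open scoped ComplexOrder Kronecker

/-- The trace norm `‖Y‖₁ = Tr √(Yᴴ Y)` of a complex matrix. -/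
noncomputable def traceNorm {m : Type*} [Fintype m] [DecidableEq m]
    (Y : Matrix m m ℂ) : ℝ :=
  (((Matrix.posSemidef_conjTranspose_mul_self Y).1.eigenvectorUnitary : Matrix m m ℂ) *
    Matrix.diagonal (fun i => ((Real.sqrt ((Matrix.posSemidef_conjTranspose_mul_self Y).1.eigenvalues i) : ℝ) : ℂ)) *
    (star (Matrix.posSemidef_conjTranspose_mul_self Y).1.eigenvectorUnitary : Matrix m m ℂ)).trace.re

/-- The inner product `⟪x, y⟫ = ∑ i, conj (x i) * y i` on `m → ℂ`. -/
noncomputable def cinner {m : Type*} [Fintype m] (x y : m → ℂ) : ℂ := star x ⬝ᵥ y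

/-- An orthogonal projection: a self-adjoint idempotent matrix. -/
def IsOrthoProj {m : Type*} [Fintype m] (P : Matrix m m ℂ) : Prop :=
  P.IsHermitian ∧ P * P = P

/-- An effect: an operator `S` with `0 ≤ S ≤ 1`. -/
def IsEffect {m : Type*} [Fintype m] [DecidableEq m] (S : Matrix m m ℂ) : Prop :=
  S.PosSemidef ∧ (1 - S).PosSemidef

/-- The rank-one operator `|ψ⟩⟨ψ|`. -/
noncomputable def outer {m : Type*} (ψ : m → ℂ) : Matrix m m ℂ :=
  Matrix.vecMulVec ψ (star ψ)

/-- **Theorem 1, (SEP ⇒ separate orthogonality).**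
If two orthogonal unit vectors `ψ, φ` are perfectly discriminated by a block-diagonal
(separable) effect `S` with `0 ≤ S ≤ 1`, then their `E` and `O` parts are separately
orthogonal. -/
theorem sep_perfect_discrimination_implies_parts_orthogonal
    {n : ℕ} (P_E P_O : Matrix (Fin n) (Fin n) ℂ)
    (hPE : IsOrthoProj P_E) (hPO : IsOrthoProj P_O) (hsum : P_E + P_O = 1)
    (ψ φ : Fin n → ℂ) (hψ : cinner ψ ψ = 1) (hφ : cinner φ φ = 1)
    (horth : cinner ψ φ = 0)
    (S : Matrix (Fin n) (Fin n) ℂ) (hS : IsEffect S)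
    (hblock : S = P_E * S * P_E + P_O * S * P_O)
    (hperf : cinner ψ (S.mulVec ψ) - cinner φ (S.mulVec φ) = 1) :
    cinner (P_E.mulVec ψ) (P_E.mulVec φ) = 0 ∧
    cinner (P_O.mulVec ψ) (P_O.mulVec φ) = 0 := by
  obtain ⟨hSpos, hS1pos⟩ := hS
  have hb0 : (0:ℂ) ≤ cinner φ (S.mulVec φ) := hSpos.dotProduct_mulVec_nonneg φ
  have hq : star ψ ⬝ᵥ (1 - S) *ᵥ ψ = 1 - cinner ψ (S.mulVec ψ) := by
    rw [Matrix.sub_mulVec, Matrix.one_mulVec, dotProduct_sub]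
    simp only [cinner] at hψ ⊢
    rw [hψ]
  have ha1 : cinner ψ (S.mulVec ψ) ≤ 1 := by
    have := hS1pos.dotProduct_mulVec_nonneg ψ
    rw [hq, sub_nonneg] at this
    exact this
  have hble : cinner φ (S.mulVec φ) ≤ 0 := by
    have h : cinner φ (S.mulVec φ) = cinner ψ (S.mulVec ψ) - 1 := by
      linear_combination -hperf
    rw [h]; exact sub_nonpos.mpr ha1
  have hb : cinner φ (S.mulVec φ) = 0 := le_antisymm hble hb0
  have ha : cinner ψ (S.mulVec ψ) = 1 := by linear_combination hperf + hb
  -- S φ = 0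
  have hSφ : S *ᵥ φ = 0 := (hSpos.dotProduct_mulVec_zero_iff φ).mp hb
  -- S ψ = ψ
  have hSψ : S *ᵥ ψ = ψ := by
    have h0 : star ψ ⬝ᵥ (1 - S) *ᵥ ψ = 0 := by rw [hq, ha, sub_self]
    have := (hS1pos.dotProduct_mulVec_zero_iff ψ).mp h0
    rw [Matrix.sub_mulVec, Matrix.one_mulVec, sub_eq_zero] at this
    exact this.symm
  -- projections multiply to zero
  have hPOeq : P_O = 1 - P_E := eq_sub_of_add_eq' hsum
  have hEO : P_E * P_O = 0 := by
    rw [hPOeq, mul_sub, mul_one, hPE.2, sub_self]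
  have hOE : P_O * P_E = 0 := by
    rw [hPOeq, sub_mul, one_mul, hPE.2, sub_self]
  -- S commutes with projections
  have commP : ∀ P Q : Matrix (Fin n) (Fin n) ℂ, P * P = P → P * Q = 0 → Q * P = 0 →
      S = P * S * P + Q * S * Q → S * P = P * S := by
    intro P Q hPP hPQ hQP hbl
    have h1 : S * P = P * S * P := by
      conv_lhs => rw [hbl]
      simp only [add_mul, mul_assoc, hPP, hQP, mul_zero, add_zero]
    have h2 : P * S = P * S * P := by
      conv_lhs => rw [hbl]
      simp only [mul_add, ← mul_assoc, hPP, hPQ, zero_mul, add_zero]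
    rw [h1, ← h2]
  have hSE : S * P_E = P_E * S := commP P_E P_O hPE.2 hEO hOE hblock
  have hSO : S * P_O = P_O * S := by
    refine commP P_O P_E hPO.2 hOE hEO ?_
    rw [add_comm]; exact hblock
  -- S herm
  have hSh : Sᴴ = S := hSpos.1
  have key : ∀ P : Matrix (Fin n) (Fin n) ℂ, S * P = P * S →
      cinner (P.mulVec ψ) (P.mulVec φ) = 0 := by
    intro P hc
    have h1 : S *ᵥ (P *ᵥ ψ) = P *ᵥ ψ := by
      rw [Matrix.mulVec_mulVec, hc, ← Matrix.mulVec_mulVec, hSψ]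
    have h2 : S *ᵥ (P *ᵥ φ) = 0 := by
      rw [Matrix.mulVec_mulVec, hc, ← Matrix.mulVec_mulVec, hSφ, Matrix.mulVec_zero]
    calc cinner (P.mulVec ψ) (P.mulVec φ)
        = star (S *ᵥ (P *ᵥ ψ)) ⬝ᵥ (P *ᵥ φ) := by rw [h1]; rfl
      _ = star (P *ᵥ ψ) ⬝ᵥ (Sᴴ *ᵥ (P *ᵥ φ)) := by
          rw [Matrix.star_mulVec, ← Matrix.dotProduct_mulVec]
      _ = 0 := by rw [hSh, h2, dotProduct_zero]
  exact ⟨key P_E hSE, key P_O hSO⟩
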